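/- Let V be convex, differentiable on ℝ^d, and λ-strongly convex outside the ball B(0,R), λ ≥ 0. Let X_{k+1/3} = prox_V^τ(X_k) for a random variable X_k. Then for any m ≥ 0 and τ > 0: E|X_{k+1/3}|^m ≤ (1/(1+τλ))^{m/2}·E|X_k|^m + ((1+τλ)^{m/2}−1)/(1+τλ)^{m/2}·R^m. -/

import Mathlib

open MeasureTheory
open scoped RealInnerProductSpace Classical

lemma gradient_normsq' {d : ℕ} (x y : EuclideanSpace ℝ (Fin d)) :
    HasGradientAt (fun z => ‖z - x‖ ^ 2) ((2:ℝ) • (y - x)) y := by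
  have h1 : HasFDerivAt (fun z : EuclideanSpace ℝ (Fin d) => z - x)
      (ContinuousLinearMap.id ℝ _) y := (hasFDerivAt_id y).sub_const x
  have h2 := h1.inner ℝ h1
  rw [hasGradientAt_iff_hasFDerivAt]
  have heq : (fun z : EuclideanSpace ℝ (Fin d) => ‖z - x‖ ^ 2)
      = fun z => ⟪z - x, z - x⟫ := by
    funext z; rw [real_inner_self_eq_norm_sq]
  rw [heq]
  convert h2 using 1
  case e'_9 => rfl
  ext v
  simp only [InnerProductSpace.toDual_apply_apply, ContinuousLinearMap.comp_apply,
    ContinuousLinearMap.prod_apply, ContinuousLinearMap.id_apply, fderivInnerCLM_apply,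
    real_inner_smul_left]
  rw [real_inner_comm v (y - x)]; ring


set_option maxHeartbeats 1000000 in
/-- Moment bound for the (exact) proximal step: if `V` is convex, differentiable, λ-strongly
convex outside `B(0,R)`, with minimum at `0`, then
`E|prox_V^τ(X)|^m ≤ (1/(1+τλ))^{m/2} E|X|^m + ((1+τλ)^{m/2}−1)/(1+τλ)^{m/2} R^m`. -/
theorem prox_moment_bound (d : ℕ)
    (V : EuclideanSpace ℝ (Fin d) → ℝ)
    (V' : EuclideanSpace ℝ (Fin d) → EuclideanSpace ℝ (Fin d))
    (lam R : ℝ) (hlam : 0 ≤ lam) (hR : 0 ≤ R)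
    (hdiff : ∀ x, HasGradientAt V (V' x) x)
    (hconv : ConvexOn ℝ Set.univ V)
    (hconvOut : ∀ x y, V x ≥ V y + ⟪V' y, x - y⟫ +
      lam / 2 * (if y ∈ Metric.ball (0 : EuclideanSpace ℝ (Fin d)) R then (0 : ℝ) else 1) *
        ‖x - y‖ ^ 2)
    (hminV : ∀ y, V 0 ≤ V y)
    (τ : ℝ) (hτ : 0 < τ)
    (prox : EuclideanSpace ℝ (Fin d) → EuclideanSpace ℝ (Fin d))
    (hprox : ∀ x y, V (prox x) + ‖prox x - x‖ ^ 2 / (2 * τ) ≤ V y + ‖y - x‖ ^ 2 / (2 * τ))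
    (Ω : Type) (mΩ : MeasurableSpace Ω) (P : Measure Ω) (hP : IsProbabilityMeasure P)
    (X : Ω → EuclideanSpace ℝ (Fin d)) (hX : AEMeasurable X P)
    (m : ℝ) (hm : 0 ≤ m)
    (hXm : Integrable (fun ω => ‖X ω‖ ^ m) P)
    (hproxm : Integrable (fun ω => ‖prox (X ω)‖ ^ m) P) :
    (∫ ω, ‖prox (X ω)‖ ^ m ∂P) ≤
      (1 / (1 + τ * lam)) ^ (m / 2) * (∫ ω, ‖X ω‖ ^ m ∂P) +
        ((1 + τ * lam) ^ (m / 2) - 1) / (1 + τ * lam) ^ (m / 2) * R ^ m := by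
  set A : ℝ := 1 + τ * lam with hAdef
  have hA1 : (1:ℝ) ≤ A := by nlinarith
  have hA0 : (0:ℝ) < A := by linarith
  have hAm : (0:ℝ) < A ^ (m / 2) := Real.rpow_pos_of_pos hA0 _
  set c : ℝ := (1 / A) ^ (m / 2) with hcdef
  have hc_eq : c = 1 / A ^ (m / 2) := by
    rw [hcdef, Real.div_rpow zero_le_one hA0.le, Real.one_rpow]
  have hc0 : 0 < c := Real.rpow_pos_of_pos (by positivity) _
  have hc1 : c ≤ 1 := Real.rpow_le_one (by positivity)
    (by rw [div_le_one hA0]; exact hA1) (by positivity)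
  -- pointwise bound
  have key : ∀ x : EuclideanSpace ℝ (Fin d),
      ‖prox x‖ ^ m ≤ c * ‖x‖ ^ m + (1 - c) * R ^ m := by
    intro x
    set y := prox x with hy
    -- first-order optimality
    have hF : HasFDerivAt (fun z => V z + ‖z - x‖ ^ 2 / (2 * τ))
        ((InnerProductSpace.toDual ℝ _ (V' y)) +
          (2 * τ)⁻¹ • (InnerProductSpace.toDual ℝ _ ((2:ℝ) • (y - x)))) y := by
      have h1 := (hdiff y).hasFDerivAt
      have h2 := (gradient_normsq' x y).hasFDerivAt
      have h3 := h2.const_mul (2 * τ)⁻¹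
      have := h1.add h3
      rw [show (fun z => V z + ‖z - x‖ ^ 2 / (2 * τ)) = V + fun z => (2 * τ)⁻¹ * ‖z - x‖ ^ 2 from by
        funext z; rw [Pi.add_apply]; ring]
      exact this
    have hmin : IsLocalMin (fun z => V z + ‖z - x‖ ^ 2 / (2 * τ)) y :=
      Filter.Eventually.of_forall (fun z => hprox x z)
    have hzero := hmin.hasFDerivAt_eq_zero hF
    have hgrad : ⟪V' y, y⟫ = τ⁻¹ * ⟪x - y, y⟫ := by
      have := congrArg (fun L => L y) hzero
      simp only [ContinuousLinearMap.add_apply, ContinuousLinearMap.smul_apply,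
        InnerProductSpace.toDual_apply_apply, ContinuousLinearMap.zero_apply, smul_eq_mul,
        real_inner_smul_left] at this
      have hinner : ⟪y - x, y⟫ = -⟪x - y, y⟫ := by
        rw [← inner_neg_left]; congr 1; abel
      rw [hinner] at this
      field_simp at this ⊢
      linarith
    -- strong convexity at y against 0
    set ind : ℝ := if y ∈ Metric.ball (0 : EuclideanSpace ℝ (Fin d)) R then (0:ℝ) else 1
      with hinddef
    have hind0 : 0 ≤ ind := by rw [hinddef]; split <;> norm_num
    have hsc : lam / 2 * ind * ‖y‖ ^ 2 ≤ ⟪V' y, y⟫ := by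
      have h := hconvOut 0 y
      have h2 := hminV y
      have : ⟪V' y, (0:EuclideanSpace ℝ (Fin d)) - y⟫ = -⟪V' y, y⟫ := by
        rw [zero_sub, inner_neg_right]
      rw [this] at h
      have hn : ‖(0:EuclideanSpace ℝ (Fin d)) - y‖ = ‖y‖ := by
        rw [zero_sub, norm_neg]
      rw [hn] at h
      rw [← hinddef] at h
      linarith
    -- norm inequality
    have hxy : (1 + τ * lam * ind) * ‖y‖ ^ 2 ≤ ‖x‖ ^ 2 := by
      have hexp : ‖x‖ ^ 2 = ‖x - y‖ ^ 2 + 2 * ⟪x - y, y⟫ + ‖y‖ ^ 2 := by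
        have := @norm_add_sq_real (EuclideanSpace ℝ (Fin d)) _ _ (x - y) y
        simpa using this
      have hip : τ * (lam / 2 * ind * ‖y‖ ^ 2) ≤ ⟪x - y, y⟫ := by
        have := mul_le_mul_of_nonneg_left hsc hτ.le
        rw [hgrad] at this
        calc τ * (lam / 2 * ind * ‖y‖ ^ 2) ≤ τ * (τ⁻¹ * ⟪x - y, y⟫) := this
          _ = ⟪x - y, y⟫ := by field_simp
      nlinarith [sq_nonneg ‖x - y‖]
    have hy0 : (0:ℝ) ≤ ‖y‖ := norm_nonneg _
    have hx0 : (0:ℝ) ≤ ‖x‖ := norm_nonneg _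
    have hRm : (0:ℝ) ≤ R ^ m := Real.rpow_nonneg hR _
    by_cases hball : y ∈ Metric.ball (0 : EuclideanSpace ℝ (Fin d)) R
    · -- inside the ball : ‖y‖ ≤ R and ‖y‖ ≤ ‖x‖
      have hyR : ‖y‖ ≤ R := by
        have := mem_ball_zero_iff.mp hball; linarith
      have hyx : ‖y‖ ≤ ‖x‖ := by
        have hind_eq : ind = 0 := by rw [hinddef, if_pos hball]
        rw [hind_eq] at hxy
        nlinarith
      have h1 : ‖y‖ ^ m ≤ ‖x‖ ^ m := Real.rpow_le_rpow hy0 hyx hm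
      have h2 : ‖y‖ ^ m ≤ R ^ m := Real.rpow_le_rpow hy0 hyR hm
      nlinarith
    · -- outside the ball : A ‖y‖² ≤ ‖x‖²
      have hind_eq : ind = 1 := by rw [hinddef, if_neg hball]
      rw [hind_eq, mul_one] at hxy
      have hA' : A * ‖y‖ ^ 2 ≤ ‖x‖ ^ 2 := by rw [hAdef]; linarith
      have hsq : ‖y‖ ^ 2 ≤ ‖x‖ ^ 2 / A := by
        rw [le_div_iff₀ hA0]; linarith [hA']
      have hrp : (‖y‖ ^ 2) ^ (m / 2) ≤ (‖x‖ ^ 2 / A) ^ (m / 2) :=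
        Real.rpow_le_rpow (by positivity) hsq (by positivity)
      have hyrw : (‖y‖ ^ 2 : ℝ) ^ (m / 2) = ‖y‖ ^ m := by
        rw [← Real.rpow_natCast ‖y‖ 2, ← Real.rpow_mul hy0]
        congr 1; push_cast; ring
      have hxrw : ((‖x‖ ^ 2 : ℝ) / A) ^ (m / 2) = c * ‖x‖ ^ m := by
        rw [Real.div_rpow (by positivity) hA0.le,
          ← Real.rpow_natCast ‖x‖ 2, ← Real.rpow_mul hx0, hc_eq,
          show ((2:ℕ):ℝ) * (m / 2) = m by push_cast; ring]
        ring
      rw [hyrw, hxrw] at hrp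
      nlinarith
  -- integrate
  have hint : (∫ ω, ‖prox (X ω)‖ ^ m ∂P) ≤ ∫ ω, (c * ‖X ω‖ ^ m + (1 - c) * R ^ m) ∂P := by
    refine integral_mono hproxm ?_ (fun ω => key (X ω))
    exact (hXm.const_mul c).add (integrable_const _)
  have hrhs : (∫ ω, (c * ‖X ω‖ ^ m + (1 - c) * R ^ m) ∂P)
      = c * (∫ ω, ‖X ω‖ ^ m ∂P) + (1 - c) * R ^ m := by
    rw [integral_add (hXm.const_mul c) (integrable_const _), integral_const_mul,
      integral_const, probReal_univ]
    simp
  have hfinal : (1 - c) = (A ^ (m / 2) - 1) / A ^ (m / 2) := by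
    rw [hc_eq]; field_simp
  calc (∫ ω, ‖prox (X ω)‖ ^ m ∂P)
      ≤ ∫ ω, (c * ‖X ω‖ ^ m + (1 - c) * R ^ m) ∂P := hint
    _ = c * (∫ ω, ‖X ω‖ ^ m ∂P) + (1 - c) * R ^ m := hrhs
    _ = (1 / A) ^ (m / 2) * (∫ ω, ‖X ω‖ ^ m ∂P) +
        (A ^ (m / 2) - 1) / A ^ (m / 2) * R ^ m := by rw [hfinal]
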